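/- (Polygonal Section Bootstrap) Let Q be a convex polyhedron with a polygonal section P. If P is locally Rupert, then Q is locally Rupert. -/

import Mathlib

open Matrix

/-- Rotation by angle `θ` about the unit axis `a` (Rodrigues' formula). -/
noncomputable def rot3 (a : Fin 3 → ℝ) (θ : ℝ) (x : Fin 3 → ℝ) : Fin 3 → ℝ :=
  Real.cos θ • x + Real.sin θ • (crossProduct a x) + ((1 - Real.cos θ) * (a ⬝ᵥ x)) • a

/-- Orthogonal projection onto the xy-plane, viewed as a map to `ℝ²`. -/
def proj2 (x : Fin 3 → ℝ) : Fin 2 → ℝ := ![x 0, x 1]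

/-- Orthogonal projection `(x,y,z) ↦ (x,y,0)` of `ℝ³` onto the xy-plane. -/
def proj3 (x : Fin 3 → ℝ) : Fin 3 → ℝ := ![x 0, x 1, 0]

/-- `X ⊆ ℝ³` is locally Rupert: Rupert rotations of arbitrarily small angle exist. -/
noncomputable def IsLocallyRupert (X : Set (Fin 3 → ℝ)) : Prop :=
  ∀ ε > 0, ∃ (a : Fin 3 → ℝ) (θ : ℝ), a ⬝ᵥ a = 1 ∧ |θ| < ε ∧
    proj2 '' (rot3 a θ '' X) ⊆ interior (proj2 '' X)

/-- `X ⊆ ℝ³` is locally reverse Rupert. -/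
noncomputable def IsLocallyReverseRupert (X : Set (Fin 3 → ℝ)) : Prop :=
  ∀ ε > 0, ∃ (a : Fin 3 → ℝ) (θ : ℝ), a ⬝ᵥ a = 1 ∧ |θ| < ε ∧
    proj2 '' X ⊆ interior (proj2 '' (rot3 a θ '' X))

lemma abs_sin_le_abs' (x : ℝ) : |Real.sin x| ≤ |x| := by
  wlog h : 0 ≤ x with H
  · have h2 := H (-x) (by linarith)
    simpa using h2
  rw [abs_of_nonneg h]
  rcases le_or_gt x 1 with h1 | h1
  · rw [abs_of_nonneg (Real.sin_nonneg_of_nonneg_of_le_pi h (by linarith [Real.pi_gt_three]))]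
    exact Real.sin_le h
  · exact (Real.abs_sin_le_one x).trans h1.le

lemma one_sub_cos_le' (x : ℝ) (hx : |x| ≤ 1) : 1 - Real.cos x ≤ |x| := by
  have h := Real.one_sub_sq_div_two_le_cos (x := x)
  have h2 : x ^ 2 ≤ |x| := by nlinarith [sq_abs x, abs_nonneg x]
  linarith [abs_nonneg x]

noncomputable def uvec (a : Fin 3 → ℝ) (θ : ℝ) : Fin 3 → ℝ :=
  ![-(Real.sin θ * a 1) + (1 - Real.cos θ) * (a 2 * a 0),
    Real.sin θ * a 0 + (1 - Real.cos θ) * (a 2 * a 1),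
    Real.cos θ + (1 - Real.cos θ) * (a 2 * a 2)]

lemma rot3_uvec (a : Fin 3 → ℝ) (θ : ℝ) (ha : a 0 ^ 2 + a 1 ^ 2 + a 2 ^ 2 = 1) :
    rot3 a θ (uvec a θ) = ![0, 0, 1] := by
  have hsc : Real.sin θ ^ 2 + Real.cos θ ^ 2 = 1 := Real.sin_sq_add_cos_sq θ
  have h0 : rot3 a θ (uvec a θ) 0 = 0 := by
    simp only [rot3, uvec, cross_apply, dotProduct, Fin.sum_univ_three, Pi.add_apply,
      Pi.smul_apply, smul_eq_mul, Matrix.cons_val_zero, Matrix.cons_val_one, Matrix.head_cons,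
      Matrix.cons_val_two, Matrix.tail_cons]
    linear_combination (-(a 2 * a 0)) * hsc + ((1 - Real.cos θ) ^ 2 * (a 2 * a 0)) * ha
  have h1 : rot3 a θ (uvec a θ) 1 = 0 := by
    simp only [rot3, uvec, cross_apply, dotProduct, Fin.sum_univ_three, Pi.add_apply,
      Pi.smul_apply, smul_eq_mul, Matrix.cons_val_zero, Matrix.cons_val_one, Matrix.head_cons,
      Matrix.cons_val_two, Matrix.tail_cons]
    linear_combination (-(a 2 * a 1)) * hsc + ((1 - Real.cos θ) ^ 2 * (a 2 * a 1)) * ha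
  have h2 : rot3 a θ (uvec a θ) 2 = 1 := by
    simp only [rot3, uvec, cross_apply, dotProduct, Fin.sum_univ_three, Pi.add_apply,
      Pi.smul_apply, smul_eq_mul, Matrix.cons_val_zero, Matrix.cons_val_one, Matrix.head_cons,
      Matrix.cons_val_two, Matrix.tail_cons]
    linear_combination (1 - a 2 * a 2) * hsc +
      (Real.sin θ ^ 2 + (1 - Real.cos θ) ^ 2 * (a 2 * a 2)) * ha
  funext i
  fin_cases i
  · simpa using h0
  · simpa using h1
  · simpa using h2

lemma rot3_add_smul (a : Fin 3 → ℝ) (θ k : ℝ) (x u : Fin 3 → ℝ) :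
    rot3 a θ (x + k • u) = rot3 a θ x + k • rot3 a θ u := by
  unfold rot3
  simp only [_root_.map_add, _root_.map_smul, dotProduct_add, dotProduct_smul, smul_eq_mul]
  module

lemma habs2_aux (θ x y b1 b2 : ℝ) (hx : |x| ≤ |θ|) (hb1 : |b1| ≤ 1) (hb2 : |b2| ≤ 1)
    (hy0 : 0 ≤ y) (hy : y ≤ |θ|) : |(-(x * b1) + y * b2)| ≤ 2 * |θ| := by
  have h1 : |x * b1| ≤ |θ| := by
    rw [abs_mul]
    nlinarith [abs_nonneg x, abs_nonneg b1]
  have h2 : |y * b2| ≤ |θ| := by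
    rw [abs_mul, abs_of_nonneg hy0]
    nlinarith [abs_nonneg b2]
  calc |(-(x * b1) + y * b2)| ≤ |(-(x * b1))| + |y * b2| := abs_add_le _ _
    _ = |x * b1| + |y * b2| := by rw [abs_neg]
    _ ≤ 2 * |θ| := by linarith

lemma sq_le_one_abs (x : ℝ) (h : x ^ 2 ≤ 1) : |x| ≤ 1 := by
  nlinarith [abs_nonneg x, sq_abs x]

lemma unit_abs_le (x y z : ℝ) (h : x ^ 2 + y ^ 2 + z ^ 2 = 1) : |x| ≤ 1 :=
  sq_le_one_abs x (by nlinarith [sq_nonneg y, sq_nonneg z])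

lemma abs_mul_le_one (x y : ℝ) (hx : |x| ≤ 1) (hy : |y| ≤ 1) : |x * y| ≤ 1 := by
  rw [abs_mul]
  nlinarith [abs_nonneg x, abs_nonneg y]

lemma half_le_cos (θ : ℝ) (h : |θ| ≤ 1) : 1 / 2 ≤ Real.cos θ := by
  have h2 := Real.one_sub_sq_div_two_le_cos (x := θ)
  nlinarith [sq_abs θ, abs_nonneg θ]

lemma div_le_two_mul' (A u : ℝ) (h : 1 / 2 ≤ u) (hA : 0 ≤ A) : A / u ≤ 2 * A := by
  rw [div_le_iff₀ (by linarith : (0:ℝ) < u)]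
  nlinarith

lemma key_arith (v2 s r L σ : ℝ) (h1 : |v2| ≤ L * r) (h2 : L * s < σ) (hs : 0 ≤ s)
    (hr : 0 < r) (hL : 0 < L) : |v2| * s < r * σ := by
  nlinarith [abs_nonneg v2]

lemma final_arith (x A : ℝ) (hx : 0 < x) (hA : A ≤ 1) (hA0 : 0 ≤ A) : A * x / 2 < x := by
  nlinarith

/-- Polygonal Section Bootstrap: if `Q` has a polygonal section `P`
and `P` is locally Rupert, then `Q` is locally Rupert. -/
theorem polygonal_section_bootstrap (V : Finset (Fin 3 → ℝ))
    (Q P : Set (Fin 3 → ℝ))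
    (hQ : Q = convexHull ℝ (V : Set (Fin 3 → ℝ)))
    (hext : ∀ v ∈ V, v ∈ Set.extremePoints ℝ Q)
    (hP : P = Q ∩ {x | x 2 = 0})
    (hPint : (interior (proj2 '' P)).Nonempty)
    (hsec : Q ∩ proj2 ⁻¹' (frontier (proj2 '' P))
          = P ∩ proj2 ⁻¹' (frontier (proj2 '' P)))
    (hPr : IsLocallyRupert P) :
    IsLocallyRupert Q := by
  classical
  set S : Set (Fin 2 → ℝ) := proj2 '' P with hS
  have hQconv : Convex ℝ Q := hQ ▸ convex_convexHull ℝ _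
  have hPQ : P ⊆ Q := hP ▸ Set.inter_subset_left
  have hproj_lin : IsLinearMap ℝ proj2 := by
    constructor
    · intro x y; funext i; fin_cases i <;> simp [proj2]
    · intro c x; funext i; fin_cases i <;> simp [proj2]
  have hPz : ∀ p ∈ P, p 2 = 0 := fun p hp => (hP ▸ hp).2
  have mem_P_of : ∀ y : Fin 3 → ℝ, y 2 = 0 → proj2 y ∈ S → y ∈ P := by
    intro y hy2 hyS
    obtain ⟨p, hpP, hpe⟩ := hyS
    have hp2 : p 2 = 0 := hPz p hpP
    have hpy : p = y := by
      funext i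
      fin_cases i
      · have h0 := congrFun hpe 0; simpa [proj2] using h0
      · have h1 := congrFun hpe 1; simpa [proj2] using h1
      · simpa [hp2] using hy2.symm
    rwa [← hpy]
  -- the shadow of Q is contained in the shadow of P
  have hprojQ : ∀ q ∈ Q, proj2 q ∈ S := by
    intro q hq
    by_cases h2 : q 2 = 0
    · exact ⟨q, hP ▸ ⟨hq, h2⟩, rfl⟩
    by_contra hx
    obtain ⟨y₀, hy₀⟩ := hPint
    have hy₀S : y₀ ∈ S := interior_subset hy₀
    have hfrontier_eq : frontier S = closure S \ interior S := rfl
    set p₀ : Fin 3 → ℝ := ![y₀ 0, y₀ 1, 0] with hp₀def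
    have hprojp₀ : proj2 p₀ = y₀ := by
      funext i; fin_cases i <;> simp [proj2, hp₀def]
    have hp₀P : p₀ ∈ P := mem_P_of p₀ (by simp [hp₀def]) (hprojp₀ ▸ hy₀S)
    have hcross : (segment ℝ y₀ (proj2 q) ∩ frontier S).Nonempty := by
      by_contra hno
      rw [Set.not_nonempty_iff_eq_empty] at hno
      have hsub : segment ℝ y₀ (proj2 q) ⊆ interior S ∪ (closure S)ᶜ := by
        intro z hz
        by_cases hzi : z ∈ interior S
        · exact Or.inl hzi
        · refine Or.inr fun hzc => ?_
          exact Set.eq_empty_iff_forall_notMem.1 hno z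
            ⟨hz, hfrontier_eq ▸ ⟨hzc, hzi⟩⟩
      have hq_not_cl : proj2 q ∈ (closure S)ᶜ := by
        intro hc
        exact Set.eq_empty_iff_forall_notMem.1 hno (proj2 q)
          ⟨right_mem_segment ℝ _ _, hfrontier_eq ▸ ⟨hc, fun hi => hx (interior_subset hi)⟩⟩
      obtain ⟨z, _, hzi, hzc⟩ := (convex_segment y₀ (proj2 q)).isPreconnected (interior S)
        ((closure S)ᶜ) isOpen_interior isClosed_closure.isOpen_compl hsub
        ⟨y₀, left_mem_segment ℝ _ _, hy₀⟩ ⟨proj2 q, right_mem_segment ℝ _ _, hq_not_cl⟩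
      exact hzc (subset_closure (interior_subset hzi))
    obtain ⟨z, hzseg, hzfr⟩ := hcross
    obtain ⟨t₁, t₂, ht₁, ht₂, hsum, hz⟩ := hzseg
    have hq'Q : t₁ • p₀ + t₂ • q ∈ Q := hQconv (hPQ hp₀P) hq ht₁ ht₂ hsum
    have hq'proj : proj2 (t₁ • p₀ + t₂ • q) = z := by
      rw [hproj_lin.map_add, hproj_lin.map_smul, hproj_lin.map_smul, hprojp₀, hz]
    have hq'P : t₁ • p₀ + t₂ • q ∈ P := by
      have hmem : t₁ • p₀ + t₂ • q ∈ Q ∩ proj2 ⁻¹' (frontier S) :=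
        ⟨hq'Q, by rw [Set.mem_preimage, hq'proj]; exact hzfr⟩
      exact (hsec ▸ hmem).1
    have h0 : (t₁ • p₀ + t₂ • q) 2 = 0 := hPz _ hq'P
    have h0' : t₁ * p₀ 2 + t₂ * q 2 = 0 := by
      simpa [Pi.add_apply, Pi.smul_apply, smul_eq_mul] using h0
    have hp₀2 : p₀ 2 = 0 := by simp [hp₀def]
    have ht₂0 : t₂ = 0 := by
      rw [hp₀2, mul_zero, zero_add] at h0'
      exact (mul_eq_zero.1 h0').resolve_right h2
    have ht₁1 : t₁ = 1 := by linarith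
    have hzy : z = y₀ := by rw [← hz, ht₂0, ht₁1]; simp
    rw [hzy, hfrontier_eq] at hzfr
    exact hzfr.2 hy₀
  -- S is convex
  have hplane : Convex ℝ {x : Fin 3 → ℝ | x 2 = 0} := by
    intro x hx y hy a b _ _ _
    simp only [Set.mem_setOf_eq] at *
    simp [Pi.add_apply, Pi.smul_apply, smul_eq_mul, hx, hy]
  have hPconv : Convex ℝ P := hP ▸ hQconv.inter hplane
  have hSconv : Convex ℝ S := hPconv.is_linear_image hproj_lin
  -- radii around projections of vertices with nonzero height
  have hvex : ∀ v : V, ∃ r : ℝ, 0 < r ∧ ((v : Fin 3 → ℝ) 2 ≠ 0 →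
      Metric.ball (proj2 (v : Fin 3 → ℝ)) r ⊆ S) := by
    intro v
    have hvQ : (v : Fin 3 → ℝ) ∈ Q := hQ ▸ subset_convexHull ℝ _ v.2
    by_cases h2 : (v : Fin 3 → ℝ) 2 = 0
    · exact ⟨1, one_pos, fun h => (h h2).elim⟩
    · have hvS : proj2 (v : Fin 3 → ℝ) ∈ S := hprojQ _ hvQ
      have hfr : proj2 (v : Fin 3 → ℝ) ∉ frontier S := by
        intro hf
        have hmemv : (v : Fin 3 → ℝ) ∈ Q ∩ proj2 ⁻¹' (frontier S) := ⟨hvQ, hf⟩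
        rw [hsec] at hmemv
        exact h2 (hPz _ hmemv.1)
      have hint : proj2 (v : Fin 3 → ℝ) ∈ interior S := by
        by_contra hni
        exact hfr ⟨subset_closure hvS, hni⟩
      obtain ⟨r, hr, hball⟩ := Metric.isOpen_iff.1 isOpen_interior _ hint
      exact ⟨r, hr, fun _ => hball.trans interior_subset⟩
  choose r hrpos hrball using hvex
  set L : ℝ := 1 + ∑ v : V, |(v : Fin 3 → ℝ) 2| / r v with hLdef
  have hsum0 : 0 ≤ ∑ v : V, |(v : Fin 3 → ℝ) 2| / r v :=
    Finset.sum_nonneg fun v _ => div_nonneg (abs_nonneg _) (hrpos v).le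
  have hLpos : 0 < L := by rw [hLdef]; linarith
  have hLv : ∀ v : V, |(v : Fin 3 → ℝ) 2| ≤ L * r v := by
    intro v
    have h1 : |(v : Fin 3 → ℝ) 2| / r v ≤ L := by
      rw [hLdef]
      have h2 := Finset.single_le_sum (f := fun w : V => |(w : Fin 3 → ℝ) 2| / r w)
        (fun w _ => div_nonneg (abs_nonneg _) (hrpos w).le) (Finset.mem_univ v)
      linarith
    calc |(v : Fin 3 → ℝ) 2| = (|(v : Fin 3 → ℝ) 2| / r v) * r v :=
          (div_mul_cancel₀ _ (hrpos v).ne').symm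
      _ ≤ L * r v := mul_le_mul_of_nonneg_right h1 (hrpos v).le
  -- key shadow-thickness lemma
  have hkey : ∀ q ∈ Q, ∀ s : Fin 2 → ℝ, L * ‖s‖ < |q 2| → proj2 q + s ∈ S := by
    intro q hq s hs
    have hq' : q ∈ convexHull ℝ (V : Set (Fin 3 → ℝ)) := hQ ▸ hq
    rw [Finset.convexHull_eq] at hq'
    obtain ⟨w, hw0, hw1, hwq⟩ := hq'
    have hq_eq : ∑ v ∈ V, w v • v = q := by
      rw [← hwq, Finset.centerMass_eq_of_sum_1 _ _ hw1]
      simp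
    set σ : ℝ := ∑ v ∈ V, w v * |v 2| with hσdef
    have hq2 : q 2 = ∑ v ∈ V, w v * v 2 := by
      rw [← hq_eq, Finset.sum_apply]
      simp [Pi.smul_apply, smul_eq_mul]
    have hq2σ : |q 2| ≤ σ := by
      rw [hq2, hσdef]
      refine (Finset.abs_sum_le_sum_abs _ _).trans ?_
      refine Finset.sum_le_sum fun v hv => ?_
      rw [abs_mul, abs_of_nonneg (hw0 v hv)]
    have hσpos : 0 < σ :=
      lt_of_lt_of_le (lt_of_le_of_lt (mul_nonneg hLpos.le (norm_nonneg s)) hs) hq2σ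
    have hsσ : L * ‖s‖ < σ := lt_of_lt_of_le hs hq2σ
    have hproj_sum : proj2 q = ∑ v ∈ V, w v • proj2 v := by
      have hmap : proj2 (∑ v ∈ V, w v • v) = ∑ v ∈ V, proj2 (w v • v) :=
        map_sum (IsLinearMap.mk' proj2 hproj_lin) _ _
      rw [← hq_eq, hmap]
      exact Finset.sum_congr rfl fun v _ => hproj_lin.map_smul _ _
    have himg : proj2 q + s = ∑ v ∈ V, w v • (proj2 v + (|v 2| / σ) • s) := by
      have hterm : ∀ v ∈ V, w v • (proj2 v + (|v 2| / σ) • s)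
          = w v • proj2 v + (w v * (|v 2| / σ)) • s := by
        intro v _
        rw [smul_add, smul_smul]
      have hcoef : (∑ v ∈ V, w v * (|v 2| / σ)) = 1 := by
        have : ∀ v ∈ V, w v * (|v 2| / σ) = (w v * |v 2|) / σ := fun v _ => by ring
        rw [Finset.sum_congr rfl this, ← Finset.sum_div, ← hσdef, div_self hσpos.ne']
      rw [Finset.sum_congr rfl hterm, Finset.sum_add_distrib, ← Finset.sum_smul, hcoef,
        one_smul, hproj_sum]
    rw [himg]
    refine hSconv.sum_mem (fun v hv => hw0 v hv) hw1 fun v hv => ?_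
    by_cases h2 : v 2 = 0
    · have : proj2 v ∈ S := hprojQ v (hQ ▸ subset_convexHull ℝ _ hv)
      simpa [h2] using this
    · refine hrball ⟨v, hv⟩ h2 ?_
      rw [Metric.mem_ball, dist_eq_norm, add_sub_cancel_left, norm_smul, Real.norm_eq_abs,
        abs_of_nonneg (div_nonneg (abs_nonneg _) hσpos.le)]
      have hLv' := hLv ⟨v, hv⟩
      have hrv := hrpos ⟨v, hv⟩
      rw [div_mul_eq_mul_div, div_lt_iff₀ hσpos]
      exact key_arith _ _ _ _ _ hLv' hsσ (norm_nonneg s) hrv hLpos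
  -- main argument
  intro ε hε
  have h8Lpos : (0:ℝ) < 1 / (8 * L) := by
    apply one_div_pos.2
    linarith
  have hδpos : 0 < min ε (min 1 (1 / (8 * L))) := lt_min hε (lt_min one_pos h8Lpos)
  obtain ⟨a, θ, ha, hθ, hRup⟩ := hPr _ hδpos
  refine ⟨a, θ, ha, lt_of_lt_of_le hθ (min_le_left _ _), ?_⟩
  have hθ1 : |θ| ≤ 1 := ((lt_of_lt_of_le hθ ((min_le_right _ _).trans (min_le_left _ _)))).le
  have hθL : |θ| ≤ 1 / (8 * L) :=
    ((lt_of_lt_of_le hθ ((min_le_right _ _).trans (min_le_right _ _)))).le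
  have ha' : a 0 ^ 2 + a 1 ^ 2 + a 2 ^ 2 = 1 := by
    have h := ha
    simp only [dotProduct, Fin.sum_univ_three] at h
    linear_combination h
  have ha0 : |a 0| ≤ 1 := unit_abs_le _ _ _ ha'
  have ha1 : |a 1| ≤ 1 := unit_abs_le (a 1) (a 0) (a 2) (by linarith)
  have ha2 : |a 2| ≤ 1 := unit_abs_le (a 2) (a 0) (a 1) (by linarith)
  have hcos1 : Real.cos θ ≤ 1 := Real.cos_le_one θ
  have h1c : 1 - Real.cos θ ≤ |θ| := one_sub_cos_le' θ hθ1
  have h1c0 : 0 ≤ 1 - Real.cos θ := by linarith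
  have hsin : |Real.sin θ| ≤ |θ| := abs_sin_le_abs' θ
  have hchalf : (1:ℝ)/2 ≤ Real.cos θ := half_le_cos θ hθ1
  set u : Fin 3 → ℝ := uvec a θ with hu
  have hu0e : u 0 = -(Real.sin θ * a 1) + (1 - Real.cos θ) * (a 2 * a 0) := by
    simp [hu, uvec]
  have hu1e : u 1 = Real.sin θ * a 0 + (1 - Real.cos θ) * (a 2 * a 1) := by
    simp [hu, uvec]
  have hu2e : u 2 = Real.cos θ + (1 - Real.cos θ) * (a 2 * a 2) := by
    simp [hu, uvec]
  have hu2pos : (1:ℝ)/2 ≤ u 2 := by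
    rw [hu2e]
    have hnn : 0 ≤ (1 - Real.cos θ) * (a 2 * a 2) := mul_nonneg h1c0 (mul_self_nonneg _)
    linarith
  have hu0b : |u 0| ≤ 2 * |θ| := by
    rw [hu0e]
    have hb : |a 2 * a 0| ≤ 1 := abs_mul_le_one _ _ ha2 ha0
    exact habs2_aux θ (Real.sin θ) (1 - Real.cos θ) (a 1) (a 2 * a 0) hsin ha1 hb h1c0 h1c
  have hu1b : |u 1| ≤ 2 * |θ| := by
    rw [hu1e]
    have hb : |a 2 * a 1| ≤ 1 := abs_mul_le_one _ _ ha2 ha1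
    have := habs2_aux θ (-Real.sin θ) (1 - Real.cos θ) (a 0) (a 2 * a 1)
      (by rwa [abs_neg]) ha0 hb h1c0 h1c
    simpa using this
  have hprojub : ‖proj2 u‖ ≤ 2 * |θ| := by
    refine (pi_norm_le_iff_of_nonneg (by positivity)).2 fun i => ?_
    fin_cases i
    · simpa [proj2, Real.norm_eq_abs] using hu0b
    · simpa [proj2, Real.norm_eq_abs] using hu1b
  have hEq3 : rot3 a θ u = ![0, 0, 1] := rot3_uvec a θ ha'
  rintro y ⟨y3, ⟨q, hq, rfl⟩, rfl⟩
  have hgoal_sub : interior S ⊆ interior (proj2 '' Q) :=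
    interior_mono (Set.image_mono hPQ)
  by_cases h2 : q 2 = 0
  · exact hgoal_sub (hRup ⟨rot3 a θ q, ⟨q, hP ▸ ⟨hq, h2⟩, rfl⟩, rfl⟩)
  · set k : ℝ := q 2 / u 2 with hkdef
    have hu2ne : u 2 ≠ 0 := by linarith
    set p' : Fin 3 → ℝ := q + (-k) • u with hp'def
    have hp'2 : p' 2 = 0 := by
      simp only [hp'def, Pi.add_apply, Pi.smul_apply, smul_eq_mul, hkdef]
      field_simp
      ring
    have hkabs : |k| ≤ 2 * |q 2| := by
      rw [hkdef, abs_div, abs_of_nonneg (by linarith : (0:ℝ) ≤ u 2)]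
      exact div_le_two_mul' _ _ hu2pos (abs_nonneg _)
    have hshift : proj2 p' = proj2 q + (-k) • proj2 u := by
      rw [hp'def, hproj_lin.map_add, hproj_lin.map_smul]
    have hnorm : L * ‖(-k) • proj2 u‖ < |q 2| := by
      rw [norm_smul, Real.norm_eq_abs, abs_neg]
      have h8L : (0:ℝ) < 8 * L := by linarith
      have h8 : 8 * L * |θ| ≤ 1 := by
        rw [le_div_iff₀ h8L] at hθL
        linarith [mul_comm (|θ|) (8 * L)]
      have hq2pos : 0 < |q 2| := abs_pos.2 h2
      have hstep : |k| * ‖proj2 u‖ ≤ (2 * |q 2|) * (2 * |θ|) :=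
        mul_le_mul hkabs hprojub (norm_nonneg _) (by positivity)
      calc L * (|k| * ‖proj2 u‖) ≤ L * ((2 * |q 2|) * (2 * |θ|)) :=
            mul_le_mul_of_nonneg_left hstep hLpos.le
        _ = (8 * L * |θ|) * |q 2| / 2 := by ring
        _ < |q 2| := final_arith _ _ hq2pos h8 (by positivity)
    have hp'S : proj2 p' ∈ S := by
      rw [hshift]
      exact hkey q hq _ hnorm
    have hp'P : p' ∈ P := mem_P_of p' hp'2 hp'S
    have hrot_eq : rot3 a θ q = rot3 a θ p' + k • ![0, 0, 1] := by
      have hqp : q = p' + k • u := by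
        rw [hp'def]
        module
      rw [← hEq3, hqp, rot3_add_smul]
    have hproj_rot : proj2 (rot3 a θ q) = proj2 (rot3 a θ p') := by
      rw [hrot_eq, hproj_lin.map_add, hproj_lin.map_smul]
      have hz : proj2 (![0, 0, 1] : Fin 3 → ℝ) = 0 := by
        funext i; fin_cases i <;> simp [proj2]
      rw [hz, smul_zero, add_zero]
    rw [hproj_rot]
    exact hgoal_sub (hRup ⟨rot3 a θ p', ⟨p', hp'P, rfl⟩, rfl⟩)
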